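/- Let p be a prime, e ≥ 1, d = p^e, and let c₀ ∈ ℂ_p be such that f(z) = z^d + c₀ is PCF of exact type (m, n) with m ≥ 2 and all a_i(c₀) = f^i(0) satisfying |a_i(c₀)|_p ≤ 1. Then for every 0 ≤ i ≤ m − 2, |a_{i+n+1}(c₀) − a_{i+1}(c₀)|_p = |a_{i+n}(c₀) − a_i(c₀)|_p^d. -/

import Mathlib

private lemma binomDiff {𝕜 : Type*} [CommRing 𝕜] (x y : 𝕜) (d : ℕ) :
    x ^ d - y ^ d = ∑ k ∈ Finset.Ico 1 (d+1), (x - y) ^ k * y ^ (d - k) * (d.choose k : 𝕜) := by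
  have h : x ^ d = ((x - y) + y) ^ d := by ring_nf
  rw [h, add_pow, Finset.range_eq_Ico, Finset.sum_eq_sum_Ico_succ_bot (Nat.succ_pos d)]
  simp only [pow_zero, Nat.sub_zero, Nat.choose_zero_right, Nat.cast_one, one_mul, mul_one]
  ring

private lemma nat_pow_lb {p : ℕ} (hp : 2 ≤ p) (t : ℕ) : t * (p - 1) + 1 ≤ p ^ t := by
  induction t with
  | zero => simp
  | succ t ih =>
    have h1 : p ^ (t+1) = p ^ t * p := pow_succ p t
    have h2 : (t * (p-1) + 1) * p ≤ p ^ t * p := Nat.mul_le_mul_right p ih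
    have h3 : (t+1) * (p-1) + 1 ≤ (t * (p-1) + 1) * p := by
      obtain ⟨s, rfl⟩ : ∃ s, p = s + 2 := ⟨p - 2, by omega⟩
      have hs : s + 2 - 1 = s + 1 := rfl
      rw [hs]
      have key : (t*(s+1)+1)*(s+2) = (t+1)*(s+1)+1 + t*(s*s+2*s+1) := by ring
      omega
    omega

private lemma KI2 {p k : ℕ} (hp : 2 ≤ p) (hk : 1 ≤ k) :
    padicValNat p k * (p - 1) ≤ k - 1 := by
  have h1 : p ^ padicValNat p k ∣ k := pow_padicValNat_dvd
  have h2 : p ^ padicValNat p k ≤ k := Nat.le_of_dvd (by omega) h1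
  have h3 := nat_pow_lb hp (padicValNat p k)
  omega

private lemma pow_step {p e : ℕ} (hp : 2 ≤ p) (he : 1 ≤ e) :
    ∀ δ j : ℕ, j + δ ≤ e → p ^ (j + δ) ≤ p ^ j + δ * (p ^ (e-1) * (p-1)) := by
  intro δ
  induction δ with
  | zero => intro j _; simp
  | succ δ ih =>
    intro j hje
    have ih' := ih j (by omega)
    have h1 : p ^ (j + (δ+1)) = p ^ (j + δ) * 1 + p ^ (j + δ) * (p - 1) := by
      have e1 : p ^ (j + (δ+1)) = p ^ (j+δ) * p := pow_succ p (j+δ)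
      obtain ⟨s, rfl⟩ : ∃ s, p = s + 2 := ⟨p - 2, by omega⟩
      have hs : s + 2 - 1 = s + 1 := rfl
      rw [e1, hs]; ring
    have h2 : p ^ (j + δ) * (p-1) ≤ p ^ (e-1) * (p-1) :=
      Nat.mul_le_mul_right _ (Nat.pow_le_pow_right (by omega) (by omega))
    have h3 : (δ+1) * (p ^ (e-1) * (p-1)) = δ * (p ^ (e-1) * (p-1)) + p ^ (e-1) * (p-1) := by ring
    omega

private lemma KI1 {p e k : ℕ} (hp : 2 ≤ p) (he : 1 ≤ e) (hk1 : 1 ≤ k) (hk2 : k ≤ p ^ e) :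
    p ^ e - k ≤ (e - padicValNat p k) * (p ^ (e-1) * (p-1)) := by
  rcases eq_or_lt_of_le hk2 with rfl | hlt
  · simp
  · set j := padicValNat p k with hj
    have hdvd : p ^ j ∣ k := pow_padicValNat_dvd
    have h1 : p ^ j ≤ k := Nat.le_of_dvd (by omega) hdvd
    have hje : j ≤ e - 1 := by
      by_contra h
      have h2 : p ^ e ∣ p ^ j := pow_dvd_pow p (by omega)
      have := Nat.le_of_dvd (by omega) (h2.trans hdvd)
      omega
    have h2 := pow_step hp he (e - j) j (by omega)
    rw [show j + (e - j) = e by omega] at h2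
    omega

private lemma choose_dvd {p e k : ℕ} (hp : p.Prime) (hk1 : 1 ≤ k) (hk2 : k ≤ p ^ e) :
    p ^ (e - padicValNat p k) ∣ (p ^ e).choose k := by
  haveI : Fact p.Prime := ⟨hp⟩
  have hpos : 0 < (p ^ e).choose k := Nat.choose_pos hk2
  have h1 : emultiplicity p ((p^e).choose k) = ↑(e - multiplicity p k) :=
    hp.emultiplicity_choose_prime_pow hk2 (by omega)
  have hfin : FiniteMultiplicity p k := Nat.finiteMultiplicity_iff.2 ⟨hp.ne_one, by omega⟩
  have h3 : multiplicity p k = padicValNat p k := by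
    have h4 := padicValNat_eq_emultiplicity (p := p) (n := k) (by omega)
    have h5 := hfin.emultiplicity_eq_multiplicity
    rw [h5] at h4
    exact_mod_cast h4.symm
  have h2 : (padicValNat p ((p^e).choose k) : ℕ∞) = ↑(e - padicValNat p k) := by
    rw [padicValNat_eq_emultiplicity hpos.ne', h1, h3]
  have h2' : padicValNat p ((p^e).choose k) = e - padicValNat p k := by exact_mod_cast h2
  calc p ^ (e - padicValNat p k) = p ^ padicValNat p ((p^e).choose k) := by rw [h2']
    _ ∣ (p ^ e).choose k := pow_padicValNat_dvd

private lemma norm_choose_le {𝕜 : Type*} [NormedField 𝕜] [IsUltrametricDist 𝕜] {p e : ℕ}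
    (hp : p.Prime) (hpnorm : ‖(p : 𝕜)‖ = (p : ℝ)⁻¹) {k : ℕ} (hk1 : 1 ≤ k) (hk2 : k ≤ p ^ e) :
    ‖(((p ^ e).choose k : ℕ) : 𝕜)‖ ≤ ((p:ℝ)⁻¹) ^ (e - padicValNat p k) := by
  obtain ⟨u, hu⟩ := choose_dvd hp hk1 hk2
  rw [hu]
  push_cast
  rw [norm_mul, norm_pow, hpnorm]
  have h1 : ‖(u : 𝕜)‖ ≤ 1 := IsUltrametricDist.norm_natCast_le_one 𝕜 u
  have h2 : (0:ℝ) ≤ ((p:ℝ)⁻¹) ^ (e - padicValNat p k) := by positivity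
  exact mul_le_of_le_one_right h2 h1

private lemma norm_add_eq_right {𝕜 : Type*} [SeminormedAddCommGroup 𝕜] [IsUltrametricDist 𝕜]
    {x y : 𝕜} (h : ‖x‖ < ‖y‖) : ‖x + y‖ = ‖y‖ := by
  refine le_antisymm ((IsUltrametricDist.norm_add_le_max x y).trans (by simp [h.le])) ?_
  have h2 : ‖y‖ ≤ max ‖x + y‖ ‖x‖ := by
    calc ‖y‖ = ‖(x + y) + (-x)‖ := by rw [show (x + y) + (-x) = y from by abel]
      _ ≤ max ‖x + y‖ ‖-x‖ := IsUltrametricDist.norm_add_le_max _ _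
      _ = max ‖x + y‖ ‖x‖ := by rw [norm_neg]
  rcases le_max_iff.1 h2 with h3 | h3
  · exact h3
  · linarith

private lemma norm_add_eq_left {𝕜 : Type*} [SeminormedAddCommGroup 𝕜] [IsUltrametricDist 𝕜]
    {x y : 𝕜} (h : ‖y‖ < ‖x‖) : ‖x + y‖ = ‖x‖ := by
  rw [add_comm]; exact norm_add_eq_right h

private lemma norm_sub_le_one {𝕜 : Type*} [SeminormedAddCommGroup 𝕜] [IsUltrametricDist 𝕜]
    {x y : 𝕜} (hx : ‖x‖ ≤ 1) (hy : ‖y‖ ≤ 1) : ‖x - y‖ ≤ 1 := by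
  rw [sub_eq_add_neg]
  refine (IsUltrametricDist.norm_add_le_max x (-y)).trans ?_
  rw [norm_neg]
  exact max_le hx hy

/-- In a nonarchimedean field (such as ℂ_p) with |p| = 1/p, let
d = p^e and f(z) = z^d + c₀ be PCF of exact type (m,n) with m ≥ 2, with all
a_i = f^i(0) in the closed unit disk. Then for 0 ≤ i ≤ m−2,
|a_{i+n+1} − a_{i+1}| = |a_{i+n} − a_i|^d. -/
theorem stmt10 (p e : ℕ) (hp : p.Prime) (he : 1 ≤ e) (d : ℕ) (hd : d = p ^ e)
    (𝕜 : Type*) [NormedField 𝕜] [IsUltrametricDist 𝕜]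
    (hpnorm : ‖(p : 𝕜)‖ = (p : ℝ)⁻¹)
    (c₀ : 𝕜) (a : ℕ → 𝕜) (ha0 : a 0 = 0) (haS : ∀ i, a (i + 1) = a i ^ d + c₀)
    (m n : ℕ) (hm : 2 ≤ m) (hn : 1 ≤ n)
    (hper : a (m + n) = a m)
    (hnmin : ∀ k, 0 < k → k < n → a (m + k) ≠ a m)
    (hmmin : ∀ m', m' < m → ∀ k, 0 < k → a (m' + k) ≠ a m')
    (hunit : ∀ i, ‖a i‖ ≤ 1) :
    ∀ i ≤ m - 2, ‖a (i + n + 1) - a (i + 1)‖ = ‖a (i + n) - a i‖ ^ d := by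
  subst hd
  have hp2 : 2 ≤ p := hp.two_le
  set Q : ℝ := (p : ℝ)⁻¹ with hQdef
  have hq1 : (1:ℝ) < (p:ℝ) := by exact_mod_cast hp.one_lt
  have hq0 : (0:ℝ) < (p:ℝ) := by linarith
  have hQ0 : 0 < Q := by rw [hQdef]; positivity
  have hQ1 : Q < 1 := inv_lt_one_of_one_lt₀ hq1
  have hd2 : 2 ≤ p ^ e := le_trans hp2 (Nat.le_self_pow (by omega) p)
  set P : ℕ := p ^ (e-1) * (p-1) with hPdef
  have hP1 : 1 ≤ P := by
    rw [hPdef]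
    exact Nat.mul_pos (Nat.pow_pos (by omega)) (by omega)
  have hppP : p * P = p ^ e * (p - 1) := by
    rw [hPdef, ← mul_assoc, ← pow_succ']
    congr 2
    omega
  -- valuation of k is at most e for k ≤ p^e
  have hvle : ∀ k : ℕ, 1 ≤ k → k ≤ p ^ e → padicValNat p k ≤ e := by
    intro k hk1 hk2
    have h1 : p ^ padicValNat p k ≤ k := Nat.le_of_dvd (by omega) pow_padicValNat_dvd
    exact (Nat.pow_le_pow_iff_right hp.one_lt).1 (le_trans h1 hk2)
  -- norm bound on a general binomial term
  have hterm : ∀ (x y : 𝕜) (k : ℕ), 1 ≤ k → k ≤ p ^ e →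
      ‖(x - y) ^ k * y ^ (p ^ e - k) * (((p ^ e).choose k : ℕ) : 𝕜)‖ ≤
        ‖x - y‖ ^ k * ‖y‖ ^ (p ^ e - k) * Q ^ (e - padicValNat p k) := by
    intro x y k hk1 hk2
    rw [norm_mul, norm_mul, norm_pow, norm_pow]
    gcongr
    exact norm_choose_le hp hpnorm hk1 hk2
  have htne : ∀ j, j < m → a (j + n) - a j ≠ 0 := fun j hj =>
    sub_ne_zero.2 (hmmin j hj n (by omega))
  have hstep : ∀ j, a (j + n + 1) - a (j + 1) = a (j + n) ^ (p ^ e) - a j ^ (p ^ e) := by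
    intro j
    rw [haS (j + n), haS j, add_sub_add_right_eq_sub]
  have htle1 : ∀ j l : ℕ, ‖a j - a l‖ ≤ 1 := fun j l => norm_sub_le_one (hunit j) (hunit l)
  have htmono : ∀ j, ‖a (j + n + 1) - a (j + 1)‖ ≤ ‖a (j + n) - a j‖ := by
    intro j
    rw [hstep j, binomDiff]
    apply IsUltrametricDist.norm_sum_le_of_forall_le_of_nonneg (norm_nonneg _)
    intro k hk
    rw [Finset.mem_Ico] at hk
    refine (hterm (a (j+n)) (a j) k hk.1 (by omega)).trans ?_
    calc ‖a (j+n) - a j‖ ^ k * ‖a j‖ ^ (p^e - k) * Q ^ (e - padicValNat p k)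
        ≤ ‖a (j+n) - a j‖ ^ k * 1 * 1 := by
          gcongr
          · exact pow_le_one₀ (norm_nonneg _) (hunit j)
          · exact pow_le_one₀ hQ0.le hQ1.le
      _ = ‖a (j+n) - a j‖ ^ k := by ring
      _ ≤ ‖a (j+n) - a j‖ := pow_le_of_le_one (norm_nonneg _) (htle1 _ _) (by omega)
  have htmono' : ∀ j l : ℕ, ‖a (j + l + n) - a (j + l)‖ ≤ ‖a (j + n) - a j‖ := by
    intro j l
    induction l with
    | zero => exact le_rfl
    | succ l ih =>
      have h1 := htmono (j + l)
      rw [show j + (l+1) + n = j + l + n + 1 from by omega]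
      exact le_trans h1 ih
  have hcyc : ∀ j, a (m + j + n) = a (m + j) := by
    intro j
    induction j with
    | zero => exact hper
    | succ j ih =>
      rw [show m + (j+1) + n = (m + j + n) + 1 from by omega, haS (m + j + n), ih, ← haS (m + j)]
      rfl
  have hcycge : ∀ s, m ≤ s → a (s + n) = a s := by
    intro s hs
    obtain ⟨j, rfl⟩ : ∃ j, s = m + j := ⟨s - m, by omega⟩
    exact hcyc j
  have hcycmul : ∀ s, m ≤ s → ∀ k, a (s + k * n) = a s := by
    intro s hs k
    induction k with
    | zero => simp
    | succ k ih =>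
      rw [show s + (k+1) * n = (s + k * n) + n from by ring, hcycge (s + k * n) (by omega), ih]
  have hcycmod : ∀ s, a (m + s) = a (m + s % n) := by
    intro s
    conv_lhs => rw [show m + s = m + s % n + (s / n) * n from by
      have h2 := Nat.mod_add_div' s n
      omega]
    exact hcycmul (m + s % n) (by omega) (s / n)
  intro i hi
  have him : i + 2 ≤ m := by omega
  by_cases hgood : ‖a i‖ ^ P < ‖a (i + n) - a i‖ ^ P * p
  · -- GOOD case
    have hT0 : 0 < ‖a (i + n) - a i‖ := norm_pos_iff.2 (htne i (by omega))
    rw [hstep i, binomDiff, Finset.sum_Ico_succ_top (by omega : 1 ≤ p ^ e),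
      Nat.sub_self, pow_zero, Nat.choose_self, Nat.cast_one, mul_one, mul_one]
    have hkey : ∀ k, 1 ≤ k → k < p ^ e →
        ‖(a (i+n) - a i) ^ k * a i ^ (p ^ e - k) * (((p^e).choose k : ℕ) : 𝕜)‖
          < ‖a (i+n) - a i‖ ^ (p ^ e) := by
      intro k hk1 hk2
      refine (hterm (a (i+n)) (a i) k hk1 (by omega)).trans_lt ?_
      set T := ‖a (i + n) - a i‖
      set Y := ‖a i‖
      set v := padicValNat p k with hv
      have hvk : v ≤ e - 1 := by
        have h1 : p ^ v ∣ k := pow_padicValNat_dvd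
        have h2 : p ^ v ≤ k := Nat.le_of_dvd (by omega) h1
        by_contra hcon
        have h3 : p ^ e ≤ p ^ v := Nat.pow_le_pow_right (by omega) (by omega)
        omega
      have hKI1 : p ^ e - k ≤ (e - v) * P := by rw [hPdef]; exact KI1 hp2 he hk1 (by omega)
      have hdag : Y ^ (p ^ e - k) * Q ^ (e - v) < T ^ (p ^ e - k) := by
        refine lt_of_pow_lt_pow_left₀ P (by positivity) ?_
        have h2 : (Y ^ P) ^ (p ^ e - k) < (T ^ P * p) ^ (p ^ e - k) :=
          pow_lt_pow_left₀ hgood (by positivity) (by omega)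
        calc (Y ^ (p ^ e - k) * Q ^ (e - v)) ^ P
            = (Y ^ P) ^ (p ^ e - k) * (Q ^ (e - v)) ^ P := by ring
          _ < (T ^ P * p) ^ (p ^ e - k) * (Q ^ (e - v)) ^ P := by
              have hpos : (0:ℝ) < (Q ^ (e - v)) ^ P := by positivity
              exact mul_lt_mul_of_pos_right h2 hpos
          _ = (T ^ (p ^ e - k)) ^ P * ((p:ℝ) ^ (p ^ e - k) * Q ^ ((e - v) * P)) := by
              rw [hQdef]; ring
          _ ≤ (T ^ (p ^ e - k)) ^ P * 1 := by
              refine mul_le_mul_of_nonneg_left ?_ (by positivity)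
              rw [hQdef, inv_pow, ← div_eq_mul_inv, div_le_one (by positivity)]
              exact pow_le_pow_right₀ (by linarith) hKI1
          _ = (T ^ (p ^ e - k)) ^ P := mul_one _
      calc T ^ k * Y ^ (p ^ e - k) * Q ^ (e - v)
          = T ^ k * (Y ^ (p ^ e - k) * Q ^ (e - v)) := by ring
        _ < T ^ k * T ^ (p ^ e - k) := by
            exact mul_lt_mul_of_pos_left hdag (by positivity)
        _ = T ^ (p ^ e) := by rw [← pow_add]; congr 1; omega
    have hSlt : ‖∑ k ∈ Finset.Ico 1 (p ^ e), (a (i+n) - a i) ^ k * a i ^ (p ^ e - k) *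
        (((p^e).choose k : ℕ) : 𝕜)‖ < ‖(a (i+n) - a i) ^ (p ^ e)‖ := by
      obtain ⟨k, hkmem, hk⟩ := IsUltrametricDist.exists_norm_finset_sum_le_of_nonempty
        (Finset.nonempty_Ico.2 (by omega : 1 < p ^ e)) (fun k =>
          (a (i+n) - a i) ^ k * a i ^ (p ^ e - k) * (((p^e).choose k : ℕ) : 𝕜))
      rw [Finset.mem_Ico] at hkmem
      rw [norm_pow]
      exact hk.trans_lt (hkey k hkmem.1 hkmem.2)
    rw [norm_add_eq_right hSlt, norm_pow]
  · -- BAD case: derive a contradiction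
    exfalso
    push_neg at hgood
    have hi1 : 1 ≤ i := by
      rcases Nat.eq_zero_or_pos i with rfl | h
      · exfalso
        have hne : a (0 + n) - a 0 ≠ 0 := htne 0 (by omega)
        rw [ha0, sub_zero] at hne
        rw [ha0, norm_zero, zero_pow (by omega : P ≠ 0)] at hgood
        have h1 : (0:ℝ) < ‖a (0 + n)‖ ^ P * p := by
          have := norm_pos_iff.2 hne
          rw [sub_zero] at hgood
          positivity
        rw [sub_zero] at hgood
        linarith
      · exact h
    have hm3 : 3 ≤ m := by omega
    -- rearrange bad hypothesis
    have hbad : ‖a (i + n) - a i‖ ^ P ≤ ‖a i‖ ^ P * Q := by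
      have h1 := mul_le_mul_of_nonneg_right hgood hQ0.le
      rwa [mul_assoc, hQdef, mul_inv_cancel₀ (by positivity), mul_one] at h1
    -- Step B1 : strong smallness of t_{i+1}
    have hB1 : ‖a (i + n + 1) - a (i + 1)‖ ^ ((p-1) * P) ≤ Q ^ (p ^ e * (p - 1)) := by
      rw [hstep i, binomDiff]
      obtain ⟨k, hkmem, hk⟩ := IsUltrametricDist.exists_norm_finset_sum_le_of_nonempty
        (Finset.nonempty_Ico.2 (by omega : 1 < p ^ e + 1)) (fun k =>
          (a (i+n) - a i) ^ k * a i ^ (p ^ e - k) * (((p^e).choose k : ℕ) : 𝕜))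
      rw [Finset.mem_Ico] at hkmem
      have hk1 : 1 ≤ k := hkmem.1
      have hk2 : k ≤ p ^ e := by omega
      set T := ‖a (i + n) - a i‖
      set Y := ‖a i‖
      set v := padicValNat p k with hv
      have hKI1 : p ^ e - k ≤ (e - v) * P := by rw [hPdef]; exact KI1 hp2 he hk1 hk2
      have hExp : p ^ e * (p-1) ≤ k * (p-1) + (e - v) * (p-1) * P := by
        have h1 : p ^ e ≤ k + (e - v) * P := by omega
        have h2 : p ^ e * (p-1) ≤ (k + (e - v) * P) * (p-1) := Nat.mul_le_mul_right _ h1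
        calc p ^ e * (p-1) ≤ (k + (e - v) * P) * (p-1) := h2
          _ = k * (p-1) + (e - v) * (p-1) * P := by ring
      calc ‖∑ k ∈ Finset.Ico 1 (p ^ e + 1), (a (i+n) - a i) ^ k * a i ^ (p ^ e - k) *
              (((p^e).choose k : ℕ) : 𝕜)‖ ^ ((p-1) * P)
          ≤ (T ^ k * Y ^ (p ^ e - k) * Q ^ (e - v)) ^ ((p-1) * P) := by
            refine pow_le_pow_left₀ (norm_nonneg _) (hk.trans (hterm _ _ k hk1 hk2)) _
        _ = (T ^ P) ^ (k * (p-1)) * Y ^ ((p ^ e - k) * ((p-1) * P)) *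
              Q ^ ((e - v) * ((p-1) * P)) := by ring
        _ ≤ ((Y ^ P * Q)) ^ (k * (p-1)) * Y ^ ((p ^ e - k) * ((p-1) * P)) *
              Q ^ ((e - v) * ((p-1) * P)) := by
            gcongr
        _ = Y ^ (P * (k * (p-1)) + (p ^ e - k) * ((p-1) * P)) *
              Q ^ (k * (p-1) + (e - v) * ((p-1) * P)) := by
            ring
        _ ≤ 1 * Q ^ (p ^ e * (p-1)) := by
            gcongr ?_ * ?_
            · exact pow_le_one₀ (norm_nonneg _) (hunit i)
            · refine pow_le_pow_of_le_one hQ0.le hQ1.le ?_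
              calc p ^ e * (p-1) ≤ k * (p-1) + (e - v) * (p-1) * P := hExp
                _ = k * (p-1) + (e - v) * ((p-1) * P) := by ring
        _ = Q ^ (p ^ e * (p-1)) := one_mul _
    -- a (m-1) is nonzero
    have hprev : a (m - 1 + n) ^ (p ^ e) = a (m - 1) ^ (p ^ e) := by
      have h1 := haS (m - 1 + n)
      have h2 := haS (m - 1)
      rw [show m - 1 + n + 1 = m + n from by omega, hper] at h1
      rw [show m - 1 + 1 = m from by omega] at h2
      have h3 := h1.symm.trans h2
      exact add_right_cancel h3
    have hA0 : a (m - 1) ≠ 0 := by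
      intro h0
      have h1 : a (m - 1 + n) ^ (p ^ e) = 0 := by
        rw [hprev, h0, zero_pow (by positivity)]
      have h2 : a (m - 1 + n) = 0 := (pow_eq_zero_iff (by positivity)).1 h1
      exact htne (m - 1) (by omega) (by rw [h2, h0, sub_zero])
    have hApos : 0 < ‖a (m - 1)‖ := norm_pos_iff.2 hA0
    set w : 𝕜 := a (m - 1 + n) / a (m - 1) with hwdef
    have hw : w ^ (p ^ e) = 1 := by
      rw [hwdef, div_pow, hprev, div_self (pow_ne_zero _ hA0)]
    have hwn : ‖w‖ = 1 := by
      have h1 : ‖w‖ ^ (p ^ e) = 1 := by rw [← norm_pow, hw, norm_one]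
      rcases lt_trichotomy ‖w‖ 1 with h | h | h
      · have := pow_lt_one₀ (norm_nonneg _) h (by positivity : p ^ e ≠ 0)
        linarith
      · exact h
      · have := one_lt_pow₀ h (by positivity : p ^ e ≠ 0)
        linarith
    have hw1 : w ≠ 1 := by
      intro h
      exact htne (m - 1) (by omega) (sub_eq_zero.2 ((div_eq_one_iff_eq hA0).1 (hwdef ▸ h)))
    have hu0 : w - 1 ≠ 0 := sub_ne_zero.2 hw1
    have hupos : 0 < ‖w - 1‖ := norm_pos_iff.2 hu0
    have hUle1 : ‖w - 1‖ ≤ 1 := by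
      have := norm_sub_le_one (𝕜 := 𝕜) (x := w) (y := 1) (by rw [hwn]) (by rw [norm_one])
      exact this
    -- root of unity estimate
    have hU : Q ≤ ‖w - 1‖ ^ (p - 1) := by
      by_contra hU'
      push_neg at hU'
      have hzero : (0:𝕜) = ∑ k ∈ Finset.Ico 1 (p ^ e + 1),
          (w - 1) ^ k * 1 ^ (p ^ e - k) * (((p^e).choose k : ℕ) : 𝕜) := by
        rw [← binomDiff w 1 (p ^ e), hw, one_pow, sub_self]
      rw [Finset.sum_eq_sum_Ico_succ_bot (by omega : 1 < p ^ e + 1)] at hzero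
      have hf1 : ‖(w - 1) ^ 1 * 1 ^ (p ^ e - 1) * (((p^e).choose 1 : ℕ) : 𝕜)‖
          = ‖w - 1‖ * Q ^ e := by
        rw [Nat.choose_one_right, pow_one, one_pow, mul_one, norm_mul]
        congr 1
        rw [Nat.cast_pow, norm_pow, hpnorm]
      have hrest : ‖∑ k ∈ Finset.Ico 2 (p ^ e + 1),
          (w - 1) ^ k * 1 ^ (p ^ e - k) * (((p^e).choose k : ℕ) : 𝕜)‖ < ‖w - 1‖ * Q ^ e := by
        obtain ⟨k, hkmem, hk⟩ := IsUltrametricDist.exists_norm_finset_sum_le_of_nonempty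
          (Finset.nonempty_Ico.2 (by omega : 2 < p ^ e + 1)) (fun k =>
            (w - 1) ^ k * 1 ^ (p ^ e - k) * (((p^e).choose k : ℕ) : 𝕜))
        rw [Finset.mem_Ico] at hkmem
        have hk1 : 1 ≤ k := by omega
        have hk2 : k ≤ p ^ e := by omega
        refine hk.trans_lt ?_
        refine (hterm w 1 k hk1 hk2).trans_lt ?_
        rw [norm_one, one_pow, mul_one]
        set v := padicValNat p k with hv
        have hvle' : v ≤ e := hvle k hk1 hk2
        have hKI2 : v * (p - 1) ≤ k - 1 := by rw [hv]; exact KI2 hp2 hk1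
        have hmain : ‖w - 1‖ ^ (k - 1) < Q ^ v := by
          refine lt_of_pow_lt_pow_left₀ (p - 1) (by positivity) ?_
          calc (‖w - 1‖ ^ (k - 1)) ^ (p - 1) = (‖w - 1‖ ^ (p - 1)) ^ (k - 1) := by ring
            _ < Q ^ (k - 1) := pow_lt_pow_left₀ hU' (by positivity) (by omega)
            _ ≤ Q ^ (v * (p - 1)) := pow_le_pow_of_le_one hQ0.le hQ1.le hKI2
            _ = (Q ^ v) ^ (p - 1) := by rw [← pow_mul]
        calc ‖w - 1‖ ^ k * Q ^ (e - v) = ‖w - 1‖ ^ (k - 1) * Q ^ (e - v) * ‖w - 1‖ := by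
              conv_lhs => rw [show k = (k - 1) + 1 from by omega]
              ring
          _ < Q ^ v * Q ^ (e - v) * ‖w - 1‖ := by
              refine mul_lt_mul_of_pos_right (mul_lt_mul_of_pos_right hmain (by positivity)) hupos
          _ = ‖w - 1‖ * Q ^ e := by
              rw [← pow_add, show v + (e - v) = e from by omega]; ring
      have h1 : ‖(0:𝕜)‖ = ‖w - 1‖ * Q ^ e := by
        rw [hzero, norm_add_eq_left (by rw [hf1]; exact hrest)]
        exact hf1
      rw [norm_zero] at h1
      have : 0 < ‖w - 1‖ * Q ^ e := by positivity
      linarith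
    -- norm of t_{m-1} factors
    have htm : ‖a (m - 1 + n) - a (m - 1)‖ = ‖a (m - 1)‖ * ‖w - 1‖ := by
      rw [← norm_mul]
      congr 1
      rw [hwdef]
      field_simp
    -- chain: t_{m-1} is at most t_{i+1}
    have hchain : ‖a (m - 1 + n) - a (m - 1)‖ ≤ ‖a (i + n + 1) - a (i + 1)‖ := by
      have h1 := htmono' (i + 1) (m - 2 - i)
      rw [show i + 1 + (m - 2 - i) = m - 1 from by omega] at h1
      rw [show i + n + 1 = i + 1 + n from by omega]
      exact h1
    -- conclude ‖a (m-1)‖ ≤ Q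
    have hAQ : ‖a (m - 1)‖ ≤ Q := by
      have hNP : (p - 1) * P + P = p ^ e * (p - 1) := by
        have h1 : (p - 1) * P + P = p * P := by
          obtain ⟨s, rfl⟩ : ∃ s, p = s + 1 := ⟨p - 1, by omega⟩
          simp only [Nat.add_sub_cancel]
          ring
        rw [h1, hppP]
      have h1 : (‖a (m - 1)‖ * ‖w - 1‖) ^ ((p - 1) * P) ≤ Q ^ (p ^ e * (p - 1)) := by
        rw [← htm]
        exact le_trans (pow_le_pow_left₀ (norm_nonneg _) hchain _) hB1
      have h2 : Q ^ P ≤ (‖w - 1‖ ^ (p - 1)) ^ P := pow_le_pow_left₀ hQ0.le hU P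
      have h3 : ‖a (m - 1)‖ ^ ((p - 1) * P) * Q ^ P ≤ Q ^ ((p - 1) * P) * Q ^ P := by
        calc ‖a (m - 1)‖ ^ ((p - 1) * P) * Q ^ P
            ≤ ‖a (m - 1)‖ ^ ((p - 1) * P) * (‖w - 1‖ ^ (p - 1)) ^ P :=
              mul_le_mul_of_nonneg_left h2 (by positivity)
          _ = (‖a (m - 1)‖ * ‖w - 1‖) ^ ((p - 1) * P) := by
              ring
          _ ≤ Q ^ (p ^ e * (p - 1)) := h1
          _ = Q ^ ((p - 1) * P) * Q ^ P := by rw [← pow_add, hNP]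
      have h4 : ‖a (m - 1)‖ ^ ((p - 1) * P) ≤ Q ^ ((p - 1) * P) := by
        have hQP : (0:ℝ) < Q ^ P := by positivity
        exact le_of_mul_le_mul_right h3 hQP
      exact le_of_pow_le_pow_left₀ (Nat.mul_ne_zero (by omega) (by omega)) hQ0.le h4
    -- growth of perturbations
    have hgrow : ∀ j, ‖a (m - 1 + j) - a j‖ ≤ ‖a (m - 1)‖ * Q ^ j := by
      intro j
      induction j with
      | zero => simp [ha0]
      | succ j ih =>
        have hδ1 : ‖a (m - 1 + j) - a j‖ ≤ Q := by
          refine ih.trans ?_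
          calc ‖a (m - 1)‖ * Q ^ j ≤ Q * 1 :=
                mul_le_mul hAQ (pow_le_one₀ hQ0.le hQ1.le) (by positivity) hQ0.le
            _ = Q := mul_one _
        have hstep2 : a (m - 1 + (j + 1)) - a (j + 1)
            = a (m - 1 + j) ^ (p ^ e) - a j ^ (p ^ e) := by
          rw [show m - 1 + (j + 1) = (m - 1 + j) + 1 from by omega, haS (m - 1 + j), haS j,
            add_sub_add_right_eq_sub]
        rw [hstep2, binomDiff]
        apply IsUltrametricDist.norm_sum_le_of_forall_le_of_nonneg (by positivity)
        intro k hkmem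
        rw [Finset.mem_Ico] at hkmem
        have hk1 : 1 ≤ k := hkmem.1
        have hk2 : k ≤ p ^ e := by omega
        refine (hterm (a (m - 1 + j)) (a j) k hk1 hk2).trans ?_
        have hcommon : ‖a (m - 1 + j) - a j‖ ^ k * ‖a j‖ ^ (p ^ e - k) *
            Q ^ (e - padicValNat p k) ≤ ‖a (m - 1 + j) - a j‖ * Q := by
          rcases eq_or_lt_of_le hk1 with h1 | h1
          · -- k = 1
            subst h1
            rw [padicValNat.one, Nat.sub_zero, pow_one]
            calc ‖a (m - 1 + j) - a j‖ * ‖a j‖ ^ (p ^ e - 1) * Q ^ e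
                ≤ (‖a (m - 1 + j) - a j‖ * 1) * Q ^ 1 :=
                  mul_le_mul
                    (mul_le_mul le_rfl (pow_le_one₀ (norm_nonneg _) (hunit j))
                      (by positivity) (norm_nonneg _))
                    (pow_le_pow_of_le_one hQ0.le hQ1.le he) (by positivity) (by positivity)
              _ = ‖a (m - 1 + j) - a j‖ * Q := by ring
          · -- k ≥ 2
            calc ‖a (m - 1 + j) - a j‖ ^ k * ‖a j‖ ^ (p ^ e - k) * Q ^ (e - padicValNat p k)
                ≤ ‖a (m - 1 + j) - a j‖ ^ k * 1 * 1 :=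
                  mul_le_mul
                    (mul_le_mul le_rfl (pow_le_one₀ (norm_nonneg _) (hunit j))
                      (by positivity) (by positivity))
                    (pow_le_one₀ hQ0.le hQ1.le) (by positivity) (by positivity)
              _ = ‖a (m - 1 + j) - a j‖ ^ (k - 2) * ‖a (m - 1 + j) - a j‖ *
                    ‖a (m - 1 + j) - a j‖ := by
                  conv_lhs => rw [show k = (k - 2) + 1 + 1 from by omega]
                  ring
              _ ≤ 1 * ‖a (m - 1 + j) - a j‖ * Q :=
                  mul_le_mul
                    (mul_le_mul (pow_le_one₀ (norm_nonneg _) (htle1 _ _)) le_rfl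
                      (norm_nonneg _) zero_le_one)
                    hδ1 (norm_nonneg _) (by positivity)
              _ = ‖a (m - 1 + j) - a j‖ * Q := by ring
        refine hcommon.trans ?_
        calc ‖a (m - 1 + j) - a j‖ * Q ≤ (‖a (m - 1)‖ * Q ^ j) * Q := by
              gcongr
          _ = ‖a (m - 1)‖ * Q ^ (j + 1) := by ring
    -- final contradiction, two cases on (m-1) % n
    rcases Nat.eq_zero_or_pos ((m - 1) % n) with hr | hrpos
    · -- n ∣ m - 1
      have h1 := hgrow (m - 1)
      have hidx : a (m - 1 + (m - 1)) = a (m - 1 + n) := by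
        rw [show m - 1 + (m - 1) = m + (m - 2) from by omega, hcycmod (m - 2)]
        have h3 : (m - 2) % n = n - 1 := by
          obtain ⟨qq, hqq⟩ := Nat.dvd_of_mod_eq_zero hr
          have hqq1 : 1 ≤ qq := by
            rcases Nat.eq_zero_or_pos qq with rfl | h
            · rw [Nat.mul_zero] at hqq; omega
            · exact h
          obtain ⟨q', rfl⟩ : ∃ q', qq = q' + 1 := ⟨qq - 1, by omega⟩
          have e0 : m - 1 = q' * n + n := by rw [hqq]; ring
          rw [show m - 2 = n - 1 + q' * n from by omega, Nat.add_mul_mod_self_right]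
          exact Nat.mod_eq_of_lt (by omega)
        rw [h3]
        congr 1
        omega
      rw [hidx, htm] at h1
      have hU2 : ‖w - 1‖ ≤ Q ^ (m - 1) := le_of_mul_le_mul_left h1 hApos
      have c1 : ‖w - 1‖ ^ (p - 1) ≤ ‖w - 1‖ :=
        pow_le_of_le_one (norm_nonneg _) hUle1 (by omega)
      have c2 : Q ^ (m - 1) ≤ Q ^ 2 := pow_le_pow_of_le_one hQ0.le hQ1.le (by omega)
      have c3 : Q ^ 2 < Q := by nlinarith
      linarith
    · -- (m-1) % n ≠ 0
      have hrlt : (m - 1) % n < n := Nat.mod_lt _ (by omega)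
      have hDbound : ∀ k : ℕ, ‖a (2 * m - 1) - a m‖ ≤ Q ^ k := by
        intro k
        have h1 := hgrow (m + k * n)
        have e1 : a (m - 1 + (m + k * n)) = a (2 * m - 1) := by
          rw [show m - 1 + (m + k * n) = (2 * m - 1) + k * n from by omega]
          exact hcycmul (2 * m - 1) (by omega) k
        have e2 : a (m + k * n) = a m := hcycmul m le_rfl k
        rw [e1, e2] at h1
        refine h1.trans ?_
        calc ‖a (m - 1)‖ * Q ^ (m + k * n) ≤ 1 * Q ^ k :=
              mul_le_mul (hunit (m - 1))
                (pow_le_pow_of_le_one hQ0.le hQ1.le (by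
                  have : k ≤ k * n := Nat.le_mul_of_pos_right k (by omega)
                  omega)) (by positivity) zero_le_one
          _ = Q ^ k := one_mul _
      have hD0 : a (2 * m - 1) - a m = 0 := by
        by_contra hD
        have hpos : 0 < ‖a (2 * m - 1) - a m‖ := norm_pos_iff.2 hD
        obtain ⟨k, hk⟩ := exists_pow_lt_of_lt_one hpos hQ1
        exact absurd (hDbound k) (not_le.2 hk)
      have hEq : a (2 * m - 1) = a m := by rwa [sub_eq_zero] at hD0
      have hfin : a (m + (m - 1) % n) = a m := by
        rw [← hcycmod (m - 1), show m + (m - 1) = 2 * m - 1 from by omega]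
        exact hEq
      exact hnmin ((m - 1) % n) hrpos hrlt hfin
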